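/- For a ≥ 0 let π_a = ⊗_{i=1}^∞ Exp(2 + ia) be the product of exponential distributions with rates 2 + ia on ℝ₊^∞. For a ≠ a' (both ≥ 0), the measures π_a and π_{a'} are mutually singular. -/

import Mathlib

open MeasureTheory ProbabilityTheory
open scoped ENNReal

/-- `μ` is the infinite product of the measures `ν i`, characterized via its
finite-dimensional marginals. -/
def IsProductOf (μ : Measure (ℕ → ℝ)) (ν : ℕ → Measure ℝ) : Prop :=
  IsProbabilityMeasure μ ∧
    ∀ s : Finset ℕ, μ.map (fun f (i : s) => f i) = Measure.pi (fun i : s => ν i)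

open Real Set Filter in
/-- Tail of the exponential distribution. -/
lemma expMeasure_Ioi {r t : ℝ} (hr : 0 < r) (ht : 0 ≤ t) :
    expMeasure r (Set.Ioi t) = ENNReal.ofReal (Real.exp (-(r * t))) := by
  have hprob : IsProbabilityMeasure (expMeasure r) := isProbabilityMeasure_expMeasure hr
  have h1 : cdf (expMeasure r) t = ((expMeasure r) (Set.Iic t)).toReal := by rw [cdf_eq_real]; rfl
  have h2 : cdf (expMeasure r) t = 1 - Real.exp (-(r * t)) := by
    have := cdf_expMeasure_eq hr t
    rw [this, if_pos ht]
  have hIic : expMeasure r (Set.Iic t) = ENNReal.ofReal (1 - Real.exp (-(r * t))) := by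
    rw [← ENNReal.ofReal_toReal (measure_ne_top (expMeasure r) (Set.Iic t)), ← h1, h2]
  have he1 : Real.exp (-(r * t)) ≤ 1 := by
    rw [Real.exp_le_one_iff]
    nlinarith [mul_nonneg hr.le ht]
  have he0 : (0:ℝ) ≤ Real.exp (-(r * t)) := (Real.exp_pos _).le
  rw [← Set.compl_Iic, prob_compl_eq_one_sub measurableSet_Iic, hIic,
    show (1 : ℝ≥0∞) = ENNReal.ofReal 1 by simp, ← ENNReal.ofReal_sub _ (by linarith)]
  congr 1
  ring

/-- Finite-dimensional marginal formula for an infinite product measure. -/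
lemma IsProductOf.measure_biInter {μ : Measure (ℕ → ℝ)} {ν : ℕ → Measure ℝ}
    (h : IsProductOf μ ν) (hσ : ∀ i, SigmaFinite (ν i)) (s : Finset ℕ)
    {B : ℕ → Set ℝ} (hB : ∀ i, MeasurableSet (B i)) :
    μ (⋂ i ∈ s, (fun f => f i) ⁻¹' B i) = ∏ i ∈ s, ν i (B i) := by
  haveI := hσ
  have hproj : Measurable (fun f : ℕ → ℝ => fun i : s => f i) :=
    measurable_pi_lambda _ fun i => measurable_pi_apply _
  have hset : (⋂ i ∈ s, (fun f : ℕ → ℝ => f i) ⁻¹' B i)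
      = (fun f : ℕ → ℝ => fun i : s => f i) ⁻¹' (Set.univ.pi fun i : s => B i) := by
    ext f
    simp [Set.mem_pi]
  rw [hset, ← MeasureTheory.Measure.map_apply hproj
    (MeasurableSet.univ_pi fun i : s => hB i), h.2 s, Measure.pi_pi]
  exact (Finset.prod_coe_sort s fun i => ν i (B i))

open Real Set Filter in
lemma key_singular (a a' : ℝ) (ha : 0 ≤ a) (hlt : a < a')
    (μ ν : Measure (ℕ → ℝ))
    (hμ : IsProductOf μ (fun i => expMeasure (2 + (i + 1) * a)))
    (hν : IsProductOf ν (fun i => expMeasure (2 + (i + 1) * a'))) :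
    μ ⟂ₘ ν := by
  have ha' : 0 ≤ a' := le_of_lt (lt_of_le_of_lt ha hlt)
  set lam : ℕ → ℝ := fun i => 2 + (i + 1) * a with hlam
  set lam' : ℕ → ℝ := fun i => 2 + (i + 1) * a' with hlam'
  have hlampos : ∀ i : ℕ, 0 < lam i := fun i => by
    have : (0:ℝ) ≤ (i+1) * a := by positivity
    simp only [hlam]; linarith
  have hlampos' : ∀ i : ℕ, 0 < lam' i := fun i => by
    have : (0:ℝ) ≤ (i+1) * a' := by positivity
    simp only [hlam']; linarith
  set t : ℕ → ℝ := fun i => Real.log (i + 2) / lam i with ht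
  have hlog : ∀ i : ℕ, 0 ≤ Real.log (i + 2) := fun i =>
    Real.log_nonneg (by exact_mod_cast le_trans one_le_two (by norm_num : (2:ℝ) ≤ i + 2))
  have htnn : ∀ i, 0 ≤ t i := fun i => div_nonneg (hlog i) (hlampos i).le
  set A : ℕ → Set (ℕ → ℝ) := fun i => (fun f : ℕ → ℝ => f i) ⁻¹' Set.Ioi (t i) with hA
  have hAm : ∀ i, MeasurableSet (A i) :=
    fun i => (measurable_pi_apply i) measurableSet_Ioi
  have hσμ : ∀ i : ℕ, SigmaFinite (expMeasure (2 + ((i:ℕ) + 1) * a)) := fun i =>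
    by haveI := isProbabilityMeasure_expMeasure (hlampos i); infer_instance
  have hσν : ∀ i : ℕ, SigmaFinite (expMeasure (2 + ((i:ℕ) + 1) * a')) := fun i =>
    by haveI := isProbabilityMeasure_expMeasure (hlampos' i); infer_instance
  -- single-coordinate probabilities
  have hμA : ∀ i, μ (A i) = ENNReal.ofReal (Real.exp (-(lam i * t i))) := by
    intro i
    have := hμ.measure_biInter hσμ {i} (B := fun j => Set.Ioi (t j))
      (fun j => measurableSet_Ioi)
    simpa using (this.trans (by rw [Finset.prod_singleton]; exact expMeasure_Ioi (hlampos i) (htnn i)))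
  have hνA : ∀ i, ν (A i) = ENNReal.ofReal (Real.exp (-(lam' i * t i))) := by
    intro i
    have := hν.measure_biInter hσν {i} (B := fun j => Set.Ioi (t j))
      (fun j => measurableSet_Ioi)
    simpa using (this.trans (by rw [Finset.prod_singleton]; exact expMeasure_Ioi (hlampos' i) (htnn i)))
  -- independence under μ
  have hindep : iIndepSet A μ := by
    rw [iIndepSet_iff_meas_biInter hAm]
    intro s
    rw [hμ.measure_biInter hσμ s (fun j => measurableSet_Ioi)]
    refine Finset.prod_congr rfl fun i _ => ?_
    rw [hμA i, expMeasure_Ioi (hlampos i) (htnn i)]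
  -- exact value of μ (A i)
  have hμA' : ∀ i, μ (A i) = ENNReal.ofReal (((i : ℝ) + 2)⁻¹) := by
    intro i
    rw [hμA i]
    congr 1
    have hl : lam i * t i = Real.log (i + 2) := by
      show lam i * (Real.log (i + 2) / lam i) = _
      field_simp [(hlampos i).ne']
    rw [hl, Real.exp_neg, Real.exp_log (by positivity)]
  -- divergence of ∑ μ (A i)
  have hdiv : (∑' i, μ (A i)) = ∞ := by
    by_contra h
    have hsum : Summable fun i => (μ (A i)).toReal := ENNReal.summable_toReal h
    have hsum' : Summable fun i : ℕ => ((i : ℝ) + 2)⁻¹ := by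
      refine hsum.congr fun i => ?_
      rw [hμA' i, ENNReal.toReal_ofReal (by positivity)]
    have hsum'' : Summable fun n : ℕ => (((n + 2 : ℕ) : ℝ))⁻¹ := by
      refine hsum'.congr fun i => ?_
      push_cast
      ring
    exact Real.not_summable_natCast_inv
      ((summable_nat_add_iff 2).1 hsum'')
  -- convergence of ∑ ν (A i)
  have hconv : (∑' i, ν (A i)) ≠ ∞ := by
    set c : ℝ := (2 + a') / (2 + a) with hc
    have hc1 : 1 < c := by
      rw [hc, lt_div_iff₀ (by linarith)]
      linarith
    have hca : c * (2 + a) = 2 + a' := by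
      rw [hc, div_mul_cancel₀ _ (by linarith : (2 + a) ≠ 0)]
    have hkey : c * a ≤ a' := by
      rw [hc, div_mul_eq_mul_div, div_le_iff₀ (by linarith)]
      nlinarith
    have hbound : ∀ i : ℕ, ν (A i) ≤ ENNReal.ofReal (((i : ℝ) + 2) ^ (-c)) := by
      intro i
      rw [hνA i, Real.rpow_def_of_pos (by positivity)]
      apply ENNReal.ofReal_le_ofReal
      apply Real.exp_le_exp.2
      have hl : lam' i * t i = (lam' i / lam i) * Real.log (i + 2) := by
        rw [ht]; ring
      rw [hl]
      have hfrac : c ≤ lam' i / lam i := by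
        rw [le_div_iff₀ (hlampos i)]
        have hi : (0:ℝ) ≤ (i:ℝ) := Nat.cast_nonneg i
        show c * (2 + ((i:ℝ) + 1) * a) ≤ 2 + ((i:ℝ) + 1) * a'
        nlinarith [mul_nonneg hi (sub_nonneg.2 hkey)]
      nlinarith [mul_le_mul_of_nonneg_right hfrac (hlog i)]
    have hsummable : Summable fun i : ℕ => ((i : ℝ) + 2) ^ (-c) := by
      have hbase : Summable fun n : ℕ => (n : ℝ) ^ (-c) :=
        Real.summable_nat_rpow.2 (by linarith)
      have := (summable_nat_add_iff 2).2 hbase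
      refine this.congr fun i => ?_
      push_cast
      ring_nf
    have hle : (∑' i, ν (A i)) ≤ ENNReal.ofReal (∑' i : ℕ, ((i : ℝ) + 2) ^ (-c)) := by
      rw [ENNReal.ofReal_tsum_of_nonneg (fun i => Real.rpow_nonneg (by positivity) _) hsummable]
      exact ENNReal.tsum_le_tsum hbound
    exact ne_top_of_le_ne_top ENNReal.ofReal_ne_top hle
  have hν0 : ν (limsup A atTop) = 0 := measure_limsup_atTop_eq_zero hconv
  have hμ1 : μ (limsup A atTop) = 1 :=
    ProbabilityTheory.measure_limsup_eq_one hAm hindep hdiv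
  haveI := hμ.1
  refine ⟨(limsup A atTop)ᶜ, (MeasurableSet.measurableSet_limsup hAm).compl, ?_, ?_⟩
  · rw [prob_compl_eq_one_sub (MeasurableSet.measurableSet_limsup hAm), hμ1, tsub_self]
  · rwa [compl_compl]

theorem pi_a_mutually_singular (a a' : ℝ) (ha : 0 ≤ a) (ha' : 0 ≤ a') (hne : a ≠ a')
    (μ ν : Measure (ℕ → ℝ))
    (hμ : IsProductOf μ (fun i => expMeasure (2 + (i + 1) * a)))
    (hν : IsProductOf ν (fun i => expMeasure (2 + (i + 1) * a'))) :
    μ ⟂ₘ ν := by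
  rcases lt_or_gt_of_ne hne with h | h
  · exact key_singular a a' ha h μ ν hμ hν
  · exact (key_singular a' a ha' h ν μ hν hμ).symm
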